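/- Let C be a combinatorial class with C(x) > 0 on (0,ρ), let n ∈ ℕ with c_n > 0, and define p_n(x) = c_n x^n / C(x), the probability under the ordinary Boltzmann distribution with parameter x that the sampled structure has size n. If x_n ∈ (0,ρ) satisfies x_n·C′(x_n)/C(x_n) = n, then x_n maximizes p_n over (0,ρ): for all x ∈ (0,ρ), c_n x^n / C(x) ≤ c_n x_n^n / C(x_n). That is, the parameter value giving expected size n also maximizes the probability that the output has size exactly n. -/

import Mathlib

private lemma aux_sum_deriv (c : ℕ → ℕ) (ρ : ℝ)
    (hrad : ∀ y : ℝ, 0 ≤ y → y < ρ → Summable fun n : ℕ => (c n : ℝ) * y ^ n)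
    (r : ℝ) (hr0 : 0 < r) (hrρ : r < ρ) :
    Summable fun k : ℕ => (c k : ℝ) * ((k : ℝ) * r ^ (k - 1)) := by
  set r' := (r + ρ) / 2 with hr'
  have hrr' : r < r' := by rw [hr']; linarith
  have hr'ρ : r' < ρ := by rw [hr']; linarith
  have hr'0 : 0 < r' := lt_trans hr0 hrr'
  clear_value r'
  have hsum := hrad r' (le_of_lt hr'0) hr'ρ
  set M : ℝ := ∑' k : ℕ, (c k : ℝ) * r' ^ k with hMdef
  clear_value M
  have hM : ∀ k : ℕ, (c k : ℝ) * r' ^ k ≤ M := by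
    intro k
    rw [hMdef]
    exact Summable.le_tsum hsum k (fun j _ => by positivity)
  have hq1 : |r / r'| < 1 := by
    rw [abs_of_pos (by positivity)]
    rw [div_lt_one hr'0]; exact hrr'
  have hgeo : Summable fun k : ℕ => (k : ℝ) * (r / r') ^ k := by
    have := summable_pow_mul_geometric_of_norm_lt_one (R := ℝ) 1 hq1
    simpa using this
  refine Summable.of_nonneg_of_le (f := fun k : ℕ => (M / r) * ((k : ℝ) * (r / r') ^ k))
    (fun k => by positivity) (fun k => ?_) (hgeo.mul_left _)
  cases k with
  | zero => simp
  | succ m =>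
    have hck := hM (m + 1)
    have hc' : (c (m + 1) : ℝ) ≤ M / r' ^ (m + 1) := by
      rw [le_div_iff₀ (by positivity)]; exact hck
    have h1 : (c (m + 1) : ℝ) * (((m + 1 : ℕ) : ℝ) * r ^ (m + 1 - 1))
        ≤ (M / r' ^ (m + 1)) * (((m + 1 : ℕ) : ℝ) * r ^ m) := by
      simp only [Nat.add_sub_cancel]
      exact mul_le_mul_of_nonneg_right hc' (by positivity)
    refine h1.trans (le_of_eq ?_)
    show M / r' ^ (m + 1) * (((m + 1 : ℕ) : ℝ) * r ^ m)
        = M / r * (((m + 1 : ℕ) : ℝ) * (r / r') ^ (m + 1))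
    have hrne : r ≠ 0 := ne_of_gt hr0
    have hr'ne : r' ≠ 0 := ne_of_gt hr'0
    rw [div_pow]; field_simp
    ring

/-- If `x_n ∈ (0, ρ)` satisfies `x_n * C'(x_n) / C(x_n) = n` (the
parameter giving expected size `n`), then `x_n` maximizes over `(0, ρ)` the
probability `p_n(x) = c n * x ^ n / C(x)` that a Boltzmann(`x`) sample has size
exactly `n`. -/
theorem expected_size_parameter_maximizes_size_probability
    (C : Type*) [Countable C] (size : C → ℕ)
    (hfin : ∀ n : ℕ, {γ : C | size γ = n}.Finite)
    (c : ℕ → ℕ) (hc : ∀ n, c n = Nat.card {γ : C // size γ = n})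
    (ρ : ℝ) (hρ : 0 < ρ)
    (hrad : ∀ y : ℝ, 0 ≤ y → y < ρ → Summable fun n : ℕ => (c n : ℝ) * y ^ n)
    (f : ℝ → ℝ) (hf : ∀ y : ℝ, f y = ∑' n : ℕ, (c n : ℝ) * y ^ n)
    (hpos : ∀ y ∈ Set.Ioo (0 : ℝ) ρ, 0 < f y)
    (n : ℕ) (hn : 0 < c n)
    (xn : ℝ) (hxn : xn ∈ Set.Ioo (0 : ℝ) ρ)
    (hExp : xn * deriv f xn / f xn = n) :
    ∀ x ∈ Set.Ioo (0 : ℝ) ρ,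
      (c n : ℝ) * x ^ n / f x ≤ (c n : ℝ) * xn ^ n / f xn := by
  obtain ⟨hxn0, hxnρ⟩ := hxn
  have hfxn : 0 < f xn := hpos xn ⟨hxn0, hxnρ⟩
  -- the radius we differentiate inside
  set r : ℝ := (xn + ρ) / 2 with hrdef
  have hr0 : 0 < r := by rw [hrdef]; linarith
  have hxnr : xn < r := by rw [hrdef]; linarith
  have hrρ : r < ρ := by rw [hrdef]; linarith
  have hu : Summable fun k : ℕ => (c k : ℝ) * ((k : ℝ) * r ^ (k - 1)) :=
    aux_sum_deriv c ρ hrad r hr0 hrρ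
  set t : Set ℝ := Metric.ball (0 : ℝ) r with htdef
  have hxnt : xn ∈ t := by
    rw [htdef, Metric.mem_ball, Real.dist_eq, sub_zero, abs_of_pos hxn0]
    exact hxnr
  have hD : HasDerivAt f (∑' k : ℕ, (c k : ℝ) * ((k : ℝ) * xn ^ (k - 1))) xn := by
    have hfun : f = fun y => ∑' k : ℕ, (c k : ℝ) * y ^ k := funext hf
    rw [hfun]
    refine hasDerivAt_tsum_of_isPreconnected
      (g := fun (k : ℕ) (z : ℝ) => (c k : ℝ) * z ^ k)
      (g' := fun (k : ℕ) (z : ℝ) => (c k : ℝ) * ((k : ℝ) * z ^ (k - 1)))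
      hu Metric.isOpen_ball
      (convex_ball (0:ℝ) r).isPreconnected (fun k y _ => (hasDerivAt_pow k y).const_mul _)
      (fun k y hy => ?_) hxnt
      (hrad xn hxn0.le hxnρ) hxnt
    · rw [Metric.mem_ball, Real.dist_eq, sub_zero] at hy
      have h1 : |y| ^ (k - 1) ≤ r ^ (k - 1) := pow_le_pow_left₀ (abs_nonneg y) hy.le _
      show ‖(c k : ℝ) * ((k : ℝ) * y ^ (k - 1))‖ ≤ (c k : ℝ) * ((k : ℝ) * r ^ (k - 1))
      have heq : ‖(c k : ℝ) * ((k : ℝ) * y ^ (k - 1))‖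
          = (c k : ℝ) * ((k : ℝ) * |y| ^ (k - 1)) := by
        simp [Real.norm_eq_abs, abs_mul, abs_pow, Nat.abs_cast]
      rw [heq]
      have h2 : (k : ℝ) * |y| ^ (k - 1) ≤ (k : ℝ) * r ^ (k - 1) :=
        mul_le_mul_of_nonneg_left h1 (Nat.cast_nonneg _)
      exact mul_le_mul_of_nonneg_left h2 (Nat.cast_nonneg _)
  have hDval : deriv f xn = ∑' k : ℕ, (c k : ℝ) * ((k : ℝ) * xn ^ (k - 1)) := hD.deriv
  -- summability of the "k * xn^k" series
  have husum : Summable fun k : ℕ => (c k : ℝ) * ((k : ℝ) * xn ^ (k - 1)) := by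
    refine Summable.of_norm_bounded hu (fun k => ?_)
    have h1 : |xn| ^ (k - 1) ≤ r ^ (k - 1) := by
      apply pow_le_pow_left₀ (abs_nonneg xn)
      rw [abs_of_pos hxn0]; exact hxnr.le
    have heq : ‖(c k : ℝ) * ((k : ℝ) * xn ^ (k - 1))‖
        = (c k : ℝ) * ((k : ℝ) * |xn| ^ (k - 1)) := by
      simp [Real.norm_eq_abs, abs_mul, abs_pow, Nat.abs_cast]
    rw [heq]
    have h2 : (k : ℝ) * |xn| ^ (k - 1) ≤ (k : ℝ) * r ^ (k - 1) :=
      mul_le_mul_of_nonneg_left h1 (Nat.cast_nonneg _)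
    exact mul_le_mul_of_nonneg_left h2 (Nat.cast_nonneg _)
  have hkxnsum : Summable fun k : ℕ => (c k : ℝ) * (k : ℝ) * xn ^ k := by
    refine (husum.mul_right xn).congr (fun k => ?_)
    cases k with
    | zero => simp
    | succ m => simp only [Nat.add_sub_cancel]; push_cast; ring_nf
      
  have hxD : xn * deriv f xn = ∑' k : ℕ, (c k : ℝ) * (k : ℝ) * xn ^ k := by
    rw [hDval, ← tsum_mul_left]
    apply tsum_congr (fun k => ?_)
    cases k with
    | zero => simp
    | succ m => simp only [Nat.add_sub_cancel]; push_cast; ring_nf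
  -- the centering identity S = 0
  have hxnsum : Summable fun k : ℕ => (c k : ℝ) * xn ^ k := hrad xn hxn0.le hxnρ
  have hSsum : Summable fun k : ℕ => (c k : ℝ) * xn ^ k * ((k : ℝ) - n) := by
    have := hkxnsum.sub (hxnsum.mul_left (n : ℝ))
    refine this.congr (fun k => ?_); ring
  have hS : (∑' k : ℕ, (c k : ℝ) * xn ^ k * ((k : ℝ) - n)) = 0 := by
    have heq : ∀ k : ℕ, (c k : ℝ) * xn ^ k * ((k : ℝ) - n)
        = (c k : ℝ) * (k : ℝ) * xn ^ k - (n : ℝ) * ((c k : ℝ) * xn ^ k) := by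
      intro k; ring
    rw [tsum_congr heq, Summable.tsum_sub hkxnsum (hxnsum.mul_left _), tsum_mul_left,
      ← hxD, ← hf]
    have hxDval : xn * deriv f xn = (n : ℝ) * f xn := by
      field_simp at hExp
      linarith [hExp]
    rw [hxDval]; ring
  -- main inequality
  intro x hx
  obtain ⟨hx0, hxρ⟩ := hx
  have hfx : 0 < f x := hpos x ⟨hx0, hxρ⟩
  have hxsum : Summable fun k : ℕ => (c k : ℝ) * x ^ k := hrad x hx0.le hxρ
  set L : ℝ := Real.log x - Real.log xn with hLdef
  -- pointwise inequality
  have hexp : ∀ y : ℝ, 0 < y → ∀ m : ℕ, y ^ m = Real.exp ((m : ℝ) * Real.log y) := by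
    intro y hy m
    rw [← Real.exp_log hy, ← Real.exp_nat_mul, Real.log_exp]
  have hpt : ∀ k : ℕ,
      x ^ n * ((c k : ℝ) * xn ^ k) + (c k : ℝ) * xn ^ k * ((k : ℝ) - n) * (x ^ n * L)
        ≤ xn ^ n * ((c k : ℝ) * x ^ k) := by
    intro k
    have hb : (0 : ℝ) < x ^ n * xn ^ k := by positivity
    have hab : xn ^ n * x ^ k = (x ^ n * xn ^ k) * Real.exp (((k : ℝ) - n) * L) := by
      rw [hexp x hx0 k, hexp xn hxn0 n, hexp x hx0 n, hexp xn hxn0 k,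
        ← Real.exp_add, ← Real.exp_add, ← Real.exp_add]
      congr 1
      rw [hLdef]; ring
    have h1 : (x ^ n * xn ^ k) * (1 + ((k : ℝ) - n) * L)
        ≤ (x ^ n * xn ^ k) * Real.exp (((k : ℝ) - n) * L) :=
      mul_le_mul_of_nonneg_left
        (by linarith [Real.add_one_le_exp (((k : ℝ) - n) * L)]) hb.le
    rw [← hab] at h1
    have h2 : x ^ n * xn ^ k + (x ^ n * xn ^ k) * (((k : ℝ) - n) * L)
        ≤ xn ^ n * x ^ k := by nlinarith [h1]
    have := mul_le_mul_of_nonneg_left h2 (Nat.cast_nonneg (c k) : (0:ℝ) ≤ c k)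
    nlinarith [this]
  -- summabilities of the three series
  have hA : Summable fun k : ℕ => x ^ n * ((c k : ℝ) * xn ^ k) := hxnsum.mul_left _
  have hB : Summable fun k : ℕ => (c k : ℝ) * xn ^ k * ((k : ℝ) - n) * (x ^ n * L) :=
    hSsum.mul_right _
  have hCsum : Summable fun k : ℕ => xn ^ n * ((c k : ℝ) * x ^ k) := hxsum.mul_left _
  have hmain : x ^ n * f xn ≤ xn ^ n * f x := by
    have := Summable.tsum_le_tsum hpt (hA.add hB) hCsum
    rw [Summable.tsum_add hA hB, tsum_mul_left, tsum_mul_left, tsum_mul_right, hS] at this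
    rw [hf x, hf xn]
    linarith [this]
  rw [div_le_div_iff₀ hfx hfxn]
  calc (c n : ℝ) * x ^ n * f xn = (c n : ℝ) * (x ^ n * f xn) := by ring
    _ ≤ (c n : ℝ) * (xn ^ n * f x) :=
        mul_le_mul_of_nonneg_left hmain (Nat.cast_nonneg _)
    _ = (c n : ℝ) * xn ^ n * f x := by ring
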